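/- Let q be a complex number with |q| = 1, let (V₁,V₂) be a q-commutative pair of isometries on a complex Hilbert space H, and set V = V₁V₂. Then for every integer j ≥ 1 one has V^{*j} V₁ = q^{j−1} V₂* V^{*(j−1)} and V^{*j} V₂ = (conj q)^{j} V₁* V^{*(j−1)}. -/

import Mathlib

open ContinuousLinearMap

theorem stmt_2 {H : Type*} [NormedAddCommGroup H] [InnerProductSpace ℂ H] [CompleteSpace H]
    (q : ℂ) (hq : ‖q‖ = 1) (V₁ V₂ : H →L[ℂ] H)
    (hV₁ : adjoint V₁ ∘L V₁ = 1) (hV₂ : adjoint V₂ ∘L V₂ = 1)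
    (hcomm : V₁ ∘L V₂ = q • (V₂ ∘L V₁)) (j : ℕ) (hj : 1 ≤ j) :
    ((adjoint (V₁ ∘L V₂)) ^ j) ∘L V₁
        = q ^ (j - 1) • (adjoint V₂ ∘L ((adjoint (V₁ ∘L V₂)) ^ (j - 1))) ∧
    ((adjoint (V₁ ∘L V₂)) ^ j) ∘L V₂
        = (starRingEnd ℂ q) ^ j • (adjoint V₁ ∘L ((adjoint (V₁ ∘L V₂)) ^ (j - 1))) := by
  simp only [← ContinuousLinearMap.mul_def] at *
  set A := adjoint V₁ with hA
  set B := adjoint V₂ with hB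
  set W := adjoint (V₁ * V₂) with hWdef
  have hqq : q * (starRingEnd ℂ q) = 1 := by
    rw [Complex.mul_conj]
    norm_cast
    rw [← Complex.sq_norm, hq, one_pow]
  have hW : W = B * A := by
    rw [hWdef, ContinuousLinearMap.mul_def, adjoint_comp, ← ContinuousLinearMap.mul_def]
  have hBA : B * A = (starRingEnd ℂ q) • (A * B) := by
    have := congrArg (star : (H →L[ℂ] H) → (H →L[ℂ] H)) hcomm
    simpa [star_mul, star_smul, star_eq_adjoint, ← hA, ← hB, Complex.star_def] using this
  have hAB : A * B = q • (B * A) := by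
    rw [hBA, smul_smul, hqq, one_smul]
  have hWB : W * B = q • (B * W) := by
    rw [hW, mul_assoc, hAB, mul_smul_comm]
  have hWA : W * A = (starRingEnd ℂ q) • (A * W) := by
    rw [hW]
    conv_rhs => rw [← mul_assoc, ← smul_mul_assoc, ← hBA]
  have key : ∀ k : ℕ, W ^ (k + 1) * V₁ = q ^ k • (B * W ^ k) ∧
      W ^ (k + 1) * V₂ = (starRingEnd ℂ q) ^ (k + 1) • (A * W ^ k) := by
    intro k
    induction k with
    | zero =>
      constructor
      · simp [hW, mul_assoc, hV₁]
      · simp only [zero_add, pow_one, pow_zero, mul_one]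
        rw [hW, hBA, smul_mul_assoc, mul_assoc, hV₂, mul_one]
    | succ n ih =>
      obtain ⟨ih1, ih2⟩ := ih
      constructor
      · rw [pow_succ' W (n + 1), mul_assoc, ih1, mul_smul_comm, ← mul_assoc, hWB,
          smul_mul_assoc, smul_smul, ← pow_succ, mul_assoc, ← pow_succ' W n]
      · rw [pow_succ' W (n + 1), mul_assoc, ih2, mul_smul_comm, ← mul_assoc, hWA,
          smul_mul_assoc, smul_smul, ← pow_succ, mul_assoc, ← pow_succ' W n]
  obtain ⟨k, rfl⟩ : ∃ k, j = k + 1 := ⟨j - 1, (Nat.succ_pred_eq_of_pos hj).symm⟩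
  simpa using key k
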